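/- Let T be a split operator on a complex Hilbert space (ran(T) closed and ran(T) ∔ ker(T) = H) and let Q_T be the oblique projection onto ran(T) along ker(T). If ‖P_{T*}(I − T)‖ < 1 then the Q_T-proper splitting T = Q_T − (Q_T − T) converges, i.e., ρ(Q_T†(Q_T − T)) < 1. Conversely, if P_{T*} T is self-adjoint and ρ(Q_T†(Q_T − T)) < 1, then ‖P_{T*}(I − T)‖ < 1. -/

import Mathlib

open ContinuousLinearMap

/-- `Td` is the Moore–Penrose inverse of `T`. -/
def IsMoorePenroseInverse {H : Type*} [NormedAddCommGroup H] [InnerProductSpace ℂ H]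
    [CompleteSpace H] (T Td : H →L[ℂ] H) : Prop :=
  T ∘L Td ∘L T = T ∧ Td ∘L T ∘L Td = Td ∧
    IsSelfAdjoint (T ∘L Td) ∧ IsSelfAdjoint (Td ∘L T)

/-- Two self-adjoint idempotents with the same kernel are equal. -/
lemma sa_idem_ext {H : Type*} [NormedAddCommGroup H] [InnerProductSpace ℂ H]
    [CompleteSpace H] {E F : H →L[ℂ] H} (hEsa : IsSelfAdjoint E) (hFsa : IsSelfAdjoint F)
    (hE2 : E ∘L E = E) (hF2 : F ∘L F = F) (hker : LinearMap.ker (E : H →ₗ[ℂ] H) = LinearMap.ker (F : H →ₗ[ℂ] H)) :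
    E = F := by
  have hEF : E ∘L F = E := by
    ext x
    have h1 : F (x - F x) = 0 := by
      have := congrArg (fun A => A x) hF2
      simp only [comp_apply] at this
      simp [map_sub, this]
    have h2 : E (x - F x) = 0 := by
      have : x - F x ∈ LinearMap.ker (E : H →ₗ[ℂ] H) := hker ▸ (by simpa using h1)
      simpa using this
    have := h2
    simp only [map_sub, sub_eq_zero] at this
    simpa [comp_apply] using this.symm
  calc E = adjoint E := hEsa.adjoint_eq.symm
    _ = adjoint (E ∘L F) := by rw [hEF]
    _ = adjoint F ∘L adjoint E := by rw [adjoint_comp]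
    _ = F ∘L E := by rw [hEsa.adjoint_eq, hFsa.adjoint_eq]
    _ = F := by
        ext x
        have h1 : E (x - E x) = 0 := by
          have := congrArg (fun A => A x) hE2
          simp only [comp_apply] at this
          simp [map_sub, this]
        have h2 : F (x - E x) = 0 := by
          have : x - E x ∈ LinearMap.ker (F : H →ₗ[ℂ] H) := hker ▸ (by simpa using h1)
          simpa using this
        simp only [map_sub, sub_eq_zero] at h2
        simpa [comp_apply] using h2.symm

/-- Convergence of the `Q_T`-proper splitting of a split operator. -/
theorem Q_proper_splitting_convergence
    {H : Type*} [NormedAddCommGroup H] [InnerProductSpace ℂ H] [CompleteSpace H]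
    (T Q Qd P : H →L[ℂ] H)
    (hTcr : IsClosed (LinearMap.range (T : H →ₗ[ℂ] H) : Set H))
    (hsplitop : IsCompl (LinearMap.range (T : H →ₗ[ℂ] H)) (LinearMap.ker (T : H →ₗ[ℂ] H)))
    -- Q is the oblique projection onto ran T along ker T
    (hQ2 : Q ∘L Q = Q)
    (hQran : LinearMap.range (Q : H →ₗ[ℂ] H) = LinearMap.range (T : H →ₗ[ℂ] H))
    (hQker : LinearMap.ker (Q : H →ₗ[ℂ] H) = LinearMap.ker (T : H →ₗ[ℂ] H))
    (hQd : IsMoorePenroseInverse Q Qd)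
    -- P is the orthogonal projection onto ran T*
    (hP : IsSelfAdjoint P) (hP2 : P ∘L P = P)
    (hPran : LinearMap.range (P : H →ₗ[ℂ] H) = LinearMap.range ((adjoint T : H →L[ℂ] H) : H →ₗ[ℂ] H)) :
    (‖P ∘L (1 - T)‖ < 1 → spectralRadius ℂ (Qd ∘L (Q - T)) < 1) ∧
      (IsSelfAdjoint (P ∘L T) → spectralRadius ℂ (Qd ∘L (Q - T)) < 1 →
        ‖P ∘L (1 - T)‖ < 1) := by
  obtain ⟨hmp1, hmp2, hmp3, hmp4⟩ := hQd
  have hPsym : ∀ a b : H, (inner ℂ (P a) b : ℂ) = inner ℂ a (P b) := fun a b => by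
    nth_rewrite 1 [← hP.adjoint_eq]; exact adjoint_inner_left P b a
  -- ker (Qd ∘L Q) = ker Q
  have hkerE : LinearMap.ker ((Qd ∘L Q : H →L[ℂ] H) : H →ₗ[ℂ] H) = LinearMap.ker (Q : H →ₗ[ℂ] H) := by
    apply le_antisymm
    · intro x hx
      have hx' : Qd (Q x) = 0 := hx
      have : Q x = 0 := by
        have := congrArg (fun A => A x) hmp1
        simp only [comp_apply] at this
        rw [hx', map_zero] at this
        exact this.symm
      exact this
    · intro x hx
      have hx' : Q x = 0 := hx
      show Qd (Q x) = 0
      rw [hx', map_zero]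
  -- ker P = ker T
  have hkerP : LinearMap.ker (P : H →ₗ[ℂ] H) = LinearMap.ker (T : H →ₗ[ℂ] H) := by
    apply le_antisymm
    · intro x hx
      have hx' : P x = 0 := hx
      show T x = 0
      rw [← inner_self_eq_zero (𝕜 := ℂ)]
      have h1 : (inner ℂ (adjoint T (T x)) x : ℂ) = inner ℂ (T x) (T x) :=
        adjoint_inner_left T x (T x)
      obtain ⟨w, hw⟩ : adjoint T (T x) ∈ LinearMap.range (P : H →ₗ[ℂ] H) := by
        rw [hPran]; exact LinearMap.mem_range_self _ (T x)
      rw [← h1, ← hw]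
      rw [coe_coe, hPsym, hx', inner_zero_right]
    · intro x hx
      have hx' : T x = 0 := hx
      show P x = 0
      rw [← inner_self_eq_zero (𝕜 := ℂ)]
      obtain ⟨y, hy⟩ : P x ∈ LinearMap.range ((adjoint T : H →L[ℂ] H) : H →ₗ[ℂ] H) := by
        rw [← hPran]; exact LinearMap.mem_range_self _ x
      calc (inner ℂ (P x) (P x) : ℂ) = inner ℂ x (P (P x)) := hPsym x (P x)
        _ = inner ℂ x (P x) := by
            have := congrArg (fun A => A x) hP2
            simp only [comp_apply] at this
            rw [this]
        _ = inner ℂ x (adjoint T y) := by rw [← coe_coe (adjoint T), hy]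
        _ = inner ℂ (T x) y := by rw [adjoint_inner_right]
        _ = 0 := by rw [hx', inner_zero_left]
  -- Qd ∘L Q = P
  have hE2 : (Qd ∘L Q) ∘L (Qd ∘L Q) = Qd ∘L Q := by
    calc (Qd ∘L Q) ∘L (Qd ∘L Q) = Qd ∘L (Q ∘L Qd ∘L Q) := by
          simp only [comp_assoc]
      _ = Qd ∘L Q := by rw [hmp1]
  have hQdQ : Qd ∘L Q = P := sa_idem_ext hmp4 hP hE2 hP2 (by rw [hkerE, hQker, ← hkerP])
  -- Q ∘L T = T
  have hQT : Q ∘L T = T := by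
    ext x
    obtain ⟨y, hy⟩ : T x ∈ LinearMap.range (Q : H →ₗ[ℂ] H) := by
      rw [hQran]; exact LinearMap.mem_range_self _ x
    have : Q (Q y) = Q y := by
      have := congrArg (fun A => A y) hQ2
      simpa only [comp_apply] using this
    simp only [comp_apply, ← hy, coe_coe, this]
  -- the key identity
  have hid : P ∘L (1 - T) = P - P ∘L T := by
    ext x; simp [comp_apply, sub_apply]
  have hkey : Qd ∘L (Q - T) = P ∘L (1 - T) := by
    have h1 : Qd ∘L T = P ∘L T := by
      calc Qd ∘L T = Qd ∘L (Q ∘L T) := by rw [hQT]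
        _ = (Qd ∘L Q) ∘L T := by rw [comp_assoc]
        _ = P ∘L T := by rw [hQdQ]
    calc Qd ∘L (Q - T) = Qd ∘L Q - Qd ∘L T := by rw [comp_sub]
      _ = P - P ∘L T := by rw [hQdQ, h1]
      _ = P ∘L (1 - T) := hid.symm
  rw [hkey]
  rcases subsingleton_or_nontrivial H with hsub | hnt
  · have hz : P ∘L (1 - T) = 0 := Subsingleton.elim _ _
    rw [hz]
    constructor
    · intro _; simp
    · intro _ _; simp
  constructor
  · intro hnorm
    calc spectralRadius ℂ (P ∘L (1 - T)) ≤ ‖P ∘L (1 - T)‖₊ :=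
          spectrum.spectralRadius_le_nnnorm _
      _ < 1 := by
          rw [← ENNReal.coe_one, ENNReal.coe_lt_coe]
          exact_mod_cast hnorm
  · intro hPT hrad
    have hsa : IsSelfAdjoint (P ∘L (1 - T)) := by
      rw [hid]
      exact hP.sub hPT
    have := hsa.spectralRadius_eq_nnnorm
    rw [this] at hrad
    rw [← ENNReal.coe_one, ENNReal.coe_lt_coe] at hrad
    exact_mod_cast hrad
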